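/- arXiv:2304.06561 — 4 statements merged into one kernel-verified Lean document; each statement's English description precedes it below -/
import Mathlib

section
/- Let (X,d,m) be a metric measure space, p ∈ (1,∞), and let f, g ∈ L^p(m). Then for every δ > 0 and every ε ∈ (0,1): I_δ(f) ≤ (1−ε)^{−p} · I_{(1−ε)δ}(g) + ε^{−p} · I_{εδ}(f−g), where I_δ(h) = ∬_{{(x,y) : |h(x)−h(y)|>δ}} δ^p / (m(B_{d(x,y)}(x))·d(x,y)^p) dm(y) dm(x). -/
open MeasureTheory Metric Filter Set
open scoped ENNReal Topology NNReal

/-- The functional `I_δ(f) = ∬_{|f(x)-f(y)|>δ} δ^p / (μ(B_{d(x,y)}(x)) d(x,y)^p) dμ(y) dμ(x)`,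
with values in `[0,∞]`. -/
noncomputable def Ifun {X : Type*} [MetricSpace X] [MeasurableSpace X]
    (μ : Measure X) (p δ : ℝ) (f : X → ℝ) : ℝ≥0∞ :=
  ∫⁻ x, ∫⁻ y, Set.indicator {y | |f x - f y| > δ}
    (fun y => ENNReal.ofReal (δ ^ p) /
      (μ (ball x (dist x y)) * ENNReal.ofReal (dist x y ^ p))) y ∂μ ∂μ

/-- `Ifun` only depends on the a.e. class of `f`. -/
lemma Ifun_congr_ae {X : Type*} [MetricSpace X] [MeasurableSpace X]
    (μ : Measure X) (p δ : ℝ) {f f' : X → ℝ} (h : f =ᵐ[μ] f') :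
    Ifun μ p δ f = Ifun μ p δ f' := by
  unfold Ifun
  refine lintegral_congr_ae ?_
  filter_upwards [h] with x hx
  refine lintegral_congr_ae ?_
  filter_upwards [h] with y hy
  simp only [Set.indicator_apply, Set.mem_setOf_eq, hx, hy]

/-- The real arithmetic identity `a^(-p) * (a*δ)^p = δ^p`. -/
lemma aux_rpow_identity {a δ p : ℝ} (ha : 0 < a) (hδ : 0 ≤ δ) :
    a ^ (-p) * (a * δ) ^ p = δ ^ p := by
  rw [Real.mul_rpow ha.le hδ, ← mul_assoc, ← Real.rpow_add ha, neg_add_cancel,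
    Real.rpow_zero, one_mul]

/-- The main estimate, for measurable functions. -/
lemma Ifun_le_key {X : Type*} [MetricSpace X] [SecondCountableTopology X]
    [MeasurableSpace X] [BorelSpace X]
    (μ : Measure X) [SFinite μ] {p : ℝ} (hp0 : 0 ≤ p)
    {f g : X → ℝ} (hf : Measurable f) (hg : Measurable g)
    (δ : ℝ) (hδ : 0 < δ) (ε : ℝ) (hε0 : 0 < ε) (hε1 : ε < 1) :
    Ifun μ p δ f ≤ ENNReal.ofReal ((1 - ε) ^ (-p)) * Ifun μ p ((1 - ε) * δ) g +
      ENNReal.ofReal (ε ^ (-p)) * Ifun μ p (ε * δ) (f - g) := by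
  have hε' : 0 < 1 - ε := by linarith
  set c1 : ℝ≥0∞ := ENNReal.ofReal ((1 - ε) ^ (-p)) with hc1def
  set c2 : ℝ≥0∞ := ENNReal.ofReal (ε ^ (-p)) with hc2def
  set D : X → X → ℝ≥0∞ :=
    fun x y => μ (ball x (dist x y)) * ENNReal.ofReal (dist x y ^ p) with hD
  -- joint measurability of `D`
  have hball_meas : Measurable (fun q : X × ℝ => μ (ball q.1 q.2)) := by
    have hs : MeasurableSet {q : (X × ℝ) × X | dist q.2 q.1.1 < q.1.2} := by
      apply measurableSet_lt
      · exact Measurable.dist measurable_snd (measurable_fst.comp measurable_fst)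
      · exact measurable_snd.comp measurable_fst
    exact measurable_measure_prodMk_left (ν := μ) hs
  have hDmeas : Measurable (fun q : X × X => D q.1 q.2) := by
    refine Measurable.mul ?_ ?_
    · exact hball_meas.comp (measurable_fst.prodMk measurable_dist)
    · have hc : Continuous fun q : X × X => ENNReal.ofReal (dist q.1 q.2 ^ p) :=
        ENNReal.continuous_ofReal.comp (continuous_dist.rpow_const fun q => Or.inr hp0)
      exact hc.measurable
  -- the two multiplicative identities
  have hmul1 : c1 * ENNReal.ofReal (((1 - ε) * δ) ^ p) = ENNReal.ofReal (δ ^ p) := by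
    rw [hc1def, ← ENNReal.ofReal_mul (Real.rpow_nonneg hε'.le _),
      aux_rpow_identity hε' hδ.le]
  have hmul2 : c2 * ENNReal.ofReal ((ε * δ) ^ p) = ENNReal.ofReal (δ ^ p) := by
    rw [hc2def, ← ENNReal.ofReal_mul (Real.rpow_nonneg hε0.le _),
      aux_rpow_identity hε0 hδ.le]
  -- the pointwise estimate
  have hpt : ∀ x y : X,
      Set.indicator {y | |f x - f y| > δ} (fun y => ENNReal.ofReal (δ ^ p) / D x y) y ≤
        c1 * Set.indicator {y | |g x - g y| > (1 - ε) * δ}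
          (fun y => ENNReal.ofReal (((1 - ε) * δ) ^ p) / D x y) y +
        c2 * Set.indicator {y | |(f - g) x - (f - g) y| > ε * δ}
          (fun y => ENNReal.ofReal ((ε * δ) ^ p) / D x y) y := by
    intro x y
    by_cases h : |f x - f y| > δ
    · have hor : |g x - g y| > (1 - ε) * δ ∨ |(f - g) x - (f - g) y| > ε * δ := by
        by_contra hcon
        push_neg at hcon
        have h1 : |f x - f y| ≤ |g x - g y| + |(f - g) x - (f - g) y| := by
          have : f x - f y = (g x - g y) + ((f - g) x - (f - g) y) := by
            simp only [Pi.sub_apply]; ring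
          rw [this]; exact abs_add_le _ _
        have : (1 - ε) * δ + ε * δ = δ := by ring
        nlinarith [hcon.1, hcon.2]
      rw [Set.indicator_of_mem (show y ∈ {y | |f x - f y| > δ} from h)]
      rcases hor with h1 | h2
      · refine le_trans ?_ le_self_add
        rw [Set.indicator_of_mem (show y ∈ {y | |g x - g y| > (1 - ε) * δ} from h1),
          ← mul_div_assoc, hmul1]
      · refine le_trans ?_ le_add_self
        rw [Set.indicator_of_mem
            (show y ∈ {y | |(f - g) x - (f - g) y| > ε * δ} from h2),
          ← mul_div_assoc, hmul2]
    · rw [Set.indicator_of_notMem (show y ∉ {y | |f x - f y| > δ} from h)]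
      exact zero_le
  -- joint measurability of the two right-hand integrands
  have hK : ∀ (t : ℝ) (h : X → ℝ), Measurable h →
      Measurable (fun q : X × X =>
        Set.indicator {y | |h q.1 - h y| > t}
          (fun y => ENNReal.ofReal (t ^ p) / D q.1 y) q.2) := by
    intro t h hh
    have : (fun q : X × X =>
        Set.indicator {y | |h q.1 - h y| > t}
          (fun y => ENNReal.ofReal (t ^ p) / D q.1 y) q.2) =
        fun q : X × X => if q ∈ {q : X × X | t < |h q.1 - h q.2|}
          then ENNReal.ofReal (t ^ p) / D q.1 q.2 else 0 := by
      funext q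
      simp [Set.indicator_apply, Set.mem_setOf_eq]
    rw [this]
    refine Measurable.ite ?_ (Measurable.div measurable_const hDmeas) measurable_const
    exact measurableSet_lt measurable_const
      (((hh.comp measurable_fst).sub (hh.comp measurable_snd)).abs)
  have hKg := hK ((1 - ε) * δ) g hg
  have hKfg := hK (ε * δ) (f - g) (hf.sub hg)
  -- inner-integral measurability (for each fixed x)
  have hFy : ∀ (t : ℝ) (h : X → ℝ), Measurable h → ∀ x : X,
      Measurable (fun y =>
        Set.indicator {y | |h x - h y| > t}
          (fun y => ENNReal.ofReal (t ^ p) / D x y) y) := by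
    intro t h hh x
    exact (hK t h hh).comp (measurable_const.prodMk measurable_id)
  -- put it together
  unfold Ifun
  calc
    ∫⁻ x, ∫⁻ y, Set.indicator {y | |f x - f y| > δ}
        (fun y => ENNReal.ofReal (δ ^ p) / D x y) y ∂μ ∂μ
      ≤ ∫⁻ x, (c1 * ∫⁻ y, Set.indicator {y | |g x - g y| > (1 - ε) * δ}
            (fun y => ENNReal.ofReal (((1 - ε) * δ) ^ p) / D x y) y ∂μ) +
          (c2 * ∫⁻ y, Set.indicator {y | |(f - g) x - (f - g) y| > ε * δ}
            (fun y => ENNReal.ofReal ((ε * δ) ^ p) / D x y) y ∂μ) ∂μ := by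
        refine lintegral_mono fun x => ?_
        calc
          ∫⁻ y, Set.indicator {y | |f x - f y| > δ}
              (fun y => ENNReal.ofReal (δ ^ p) / D x y) y ∂μ
            ≤ ∫⁻ y, c1 * Set.indicator {y | |g x - g y| > (1 - ε) * δ}
                (fun y => ENNReal.ofReal (((1 - ε) * δ) ^ p) / D x y) y +
              c2 * Set.indicator {y | |(f - g) x - (f - g) y| > ε * δ}
                (fun y => ENNReal.ofReal ((ε * δ) ^ p) / D x y) y ∂μ :=
              lintegral_mono (hpt x)
          _ = _ := by
              rw [lintegral_add_left ((hFy _ g hg x).const_mul c1),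
                lintegral_const_mul c1 (hFy _ g hg x),
                lintegral_const_mul c2 (hFy _ (f - g) (hf.sub hg) x)]
    _ = c1 * Ifun μ p ((1 - ε) * δ) g + c2 * Ifun μ p (ε * δ) (f - g) := by
        rw [lintegral_add_left
            ((hKg.lintegral_prod_right').const_mul c1),
          lintegral_const_mul c1 hKg.lintegral_prod_right',
          lintegral_const_mul c2 hKfg.lintegral_prod_right']
        rfl

/-- Let `(X,d,m)` be a metric measure space, `p ∈ (1,∞)` and
`f, g ∈ L^p(m)`. Then for every `δ > 0` and `ε ∈ (0,1)`:
`I_δ(f) ≤ (1-ε)^{-p} I_{(1-ε)δ}(g) + ε^{-p} I_{εδ}(f-g)`. -/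
theorem Ifun_le_Ifun_add_Ifun {X : Type*} [MetricSpace X] [CompleteSpace X]
    [TopologicalSpace.SeparableSpace X] [MeasurableSpace X] [BorelSpace X]
    (μ : Measure X) (hμ : μ ≠ 0) (hballs : ∀ (x : X) (r : ℝ), μ (ball x r) < ∞)
    (p : ℝ) (hp : 1 < p)
    (f g : X → ℝ) (hf : MemLp f (ENNReal.ofReal p) μ) (hg : MemLp g (ENNReal.ofReal p) μ)
    (δ : ℝ) (hδ : 0 < δ) (ε : ℝ) (hε : ε ∈ Set.Ioo (0 : ℝ) 1) :
    Ifun μ p δ f ≤ ENNReal.ofReal ((1 - ε) ^ (-p)) * Ifun μ p ((1 - ε) * δ) g +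
      ENNReal.ofReal (ε ^ (-p)) * Ifun μ p (ε * δ) (f - g) := by
  haveI : SecondCountableTopology X :=
    UniformSpace.secondCountable_of_separable X
  haveI : IsLocallyFiniteMeasure μ :=
    ⟨fun x => ⟨ball x 1, ball_mem_nhds x one_pos, hballs x 1⟩⟩
  obtain ⟨hε0, hε1⟩ := hε
  have hfa : AEMeasurable f μ := hf.aestronglyMeasurable.aemeasurable
  have hga : AEMeasurable g μ := hg.aestronglyMeasurable.aemeasurable
  have hsub : (f - g) =ᵐ[μ] (hfa.mk f - hga.mk g) := hfa.ae_eq_mk.sub hga.ae_eq_mk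
  rw [Ifun_congr_ae μ p δ hfa.ae_eq_mk, Ifun_congr_ae μ p _ hga.ae_eq_mk,
    Ifun_congr_ae μ p _ hsub]
  exact Ifun_le_key μ (by linarith : (0:ℝ) ≤ p) hfa.measurable_mk hga.measurable_mk
    δ hδ ε hε0 hε1
end

section
/- Let (X,d,m) be a metric measure space, p ∈ (1,∞), and let f ∈ L^p(m). If M := sup_{δ∈(0,1)} I_δ(f) < ∞, then for every ε ∈ (0,1): J_ε(f) + ε·T(f) ≤ (p+ε)·M; in particular sup_{ε∈(0,1)} J_ε(f) < ∞ and T(f) < ∞. Here I_δ(f) = ∬_{{(x,y) : |f(x)−f(y)|>δ}} δ^p / (m(B_{d(x,y)}(x))·d(x,y)^p) dm(y) dm(x), J_ε(f) = ∬_{{(x,y) : |f(x)−f(y)|≤1}} ε·|f(x)−f(y)|^{p+ε} / (m(B_{d(x,y)}(x))·d(x,y)^p) dm(y) dm(x), and T(f) = ∬_{{(x,y) : |f(x)−f(y)|>1}} 1/(m(B_{d(x,y)}(x))·d(x,y)^p) dm(y) dm(x). -/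
open MeasureTheory Metric Filter Set
open scoped ENNReal Topology NNReal

/-- The functional
`J_δ(f) = ∬_{|f(x)-f(y)| ≤ 1} δ |f(x)-f(y)|^{p+δ} / (μ(B_{d(x,y)}(x)) d(x,y)^p) dμ(y) dμ(x)`,
with values in `[0,∞]`. -/
noncomputable def Jfun {X : Type*} [MetricSpace X] [MeasurableSpace X]
    (μ : Measure X) (p δ : ℝ) (f : X → ℝ) : ℝ≥0∞ :=
  ∫⁻ x, ∫⁻ y, Set.indicator {y | |f x - f y| ≤ 1}
    (fun y => ENNReal.ofReal (δ * |f x - f y| ^ (p + δ)) /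
      (μ (ball x (dist x y)) * ENNReal.ofReal (dist x y ^ p))) y ∂μ ∂μ

/-- The functional `T(f) = ∬_{|f(x)-f(y)| > 1} 1 / (μ(B_{d(x,y)}(x)) d(x,y)^p) dμ(y) dμ(x)`,
with values in `[0,∞]`. -/
noncomputable def Tfun {X : Type*} [MetricSpace X] [MeasurableSpace X]
    (μ : Measure X) (p : ℝ) (f : X → ℝ) : ℝ≥0∞ :=
  ∫⁻ x, ∫⁻ y, Set.indicator {y | |f x - f y| > 1}
    (fun y => 1 / (μ (ball x (dist x y)) * ENNReal.ofReal (dist x y ^ p))) y ∂μ ∂μ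

/-- FTC-type computation for the lower integral of a power. -/
lemma lintegral_rpow_Ioo_aux {b q c : ℝ} (hb : 0 ≤ b) (hq : 0 < q) (hc : 0 ≤ c) :
    ∫⁻ δ in Set.Ioo (0:ℝ) b, ENNReal.ofReal (c * δ ^ (q - 1)) =
      ENNReal.ofReal (c / q * b ^ q) := by
  rcases eq_or_lt_of_le hb with rfl | hb
  · simp [Real.zero_rpow hq.ne']
  have hint : IntervalIntegrable (fun δ : ℝ => c * δ ^ (q - 1)) volume 0 b :=
    (intervalIntegral.intervalIntegrable_rpow' (by linarith)).const_mul c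
  have hInt : IntegrableOn (fun δ : ℝ => c * δ ^ (q - 1)) (Set.Ioo 0 b) volume := by
    have := hint.1
    exact this.mono_set Set.Ioo_subset_Ioc_self
  rw [← ofReal_integral_eq_lintegral_ofReal hInt ?nn]
  case nn =>
    filter_upwards [ae_restrict_mem measurableSet_Ioo] with δ hδ
    have : (0:ℝ) ≤ δ ^ (q - 1) := Real.rpow_nonneg hδ.1.le _
    positivity
  congr 1
  have h1 : ∫ δ in Set.Ioo (0:ℝ) b, c * δ ^ (q - 1) = ∫ δ in (0:ℝ)..b, c * δ ^ (q - 1) := by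
    rw [intervalIntegral.integral_of_le hb.le, MeasureTheory.integral_Ioc_eq_integral_Ioo]
  rw [h1, intervalIntegral.integral_const_mul, integral_rpow (Or.inl (by linarith))]
  have hq1 : q - 1 + 1 = q := by ring
  rw [hq1, Real.zero_rpow hq.ne']
  ring

/-- The layer-cake style pointwise identity. -/
lemma key_pointwise_aux {p ε : ℝ} (hp : 1 < p) (hε : ε ∈ Set.Ioo (0:ℝ) 1)
    (t : ℝ) (ht : 0 ≤ t) (a : ℝ≥0∞) :
    (if t ≤ 1 then ENNReal.ofReal (ε * t ^ (p + ε)) * a else 0)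
      + ENNReal.ofReal ε * (if 1 < t then a else 0)
    = ∫⁻ δ in Set.Ioo (0:ℝ) 1,
        ENNReal.ofReal ((p + ε) * (ε * δ ^ (ε - 1)))
          * (if δ < t then ENNReal.ofReal (δ ^ p) * a else 0) := by
  obtain ⟨hε0, hε1⟩ := hε
  have hpε : (0:ℝ) < p + ε := by linarith
  have hcongr : ∫⁻ δ in Set.Ioo (0:ℝ) 1,
        ENNReal.ofReal ((p + ε) * (ε * δ ^ (ε - 1)))
          * (if δ < t then ENNReal.ofReal (δ ^ p) * a else 0)
      = ∫⁻ δ in Set.Ioo (0:ℝ) 1,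
          (Set.Iio t).indicator (fun δ => ENNReal.ofReal ((p + ε) * ε * δ ^ (p + ε - 1))) δ * a := by
    refine setLIntegral_congr_fun measurableSet_Ioo (fun δ hδ => ?_)
    by_cases hδt : δ < t
    · have hnn : (0:ℝ) ≤ δ ^ (ε - 1) := Real.rpow_nonneg hδ.1.le _
      simp only [hδt, if_pos, Set.indicator_apply, Set.mem_Iio, if_true, ← mul_assoc]
      rw [← ENNReal.ofReal_mul (by positivity)]
      congr 2
      rw [show p + ε - 1 = (ε - 1) + p by ring, Real.rpow_add hδ.1]
      ring
    · simp [hδt, Set.indicator_apply]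
  rw [hcongr]
  have hmeas : Measurable fun δ : ℝ =>
      (Set.Iio t).indicator (fun δ => ENNReal.ofReal ((p + ε) * ε * δ ^ (p + ε - 1))) δ := by
    refine Measurable.indicator ?_ measurableSet_Iio
    exact (measurable_const.mul ((measurable_id.pow measurable_const))).ennreal_ofReal
  rw [lintegral_mul_const _ hmeas, lintegral_indicator measurableSet_Iio,
    Measure.restrict_restrict measurableSet_Iio]
  have hset : Set.Iio t ∩ Set.Ioo (0:ℝ) 1 = Set.Ioo 0 (min t 1) := by
    ext δ; simp only [Set.mem_inter_iff, Set.mem_Iio, Set.mem_Ioo, lt_min_iff]; tauto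
  rw [hset, lintegral_rpow_Ioo_aux (le_min ht zero_le_one) hpε (by positivity)]
  have hsimp : (p + ε) * ε / (p + ε) = ε := by field_simp
  rw [hsimp]
  by_cases ht1 : t ≤ 1
  · rw [min_eq_left ht1]
    simp [not_lt.mpr ht1]
  · rw [min_eq_right (le_of_not_ge ht1)]
    simp [ht1, not_le.mp ht1, Real.one_rpow]

lemma Ifun_congr_aux {X : Type*} [MetricSpace X] [MeasurableSpace X] {μ : Measure X}
    {p δ : ℝ} {f g : X → ℝ} (h : f =ᵐ[μ] g) : Ifun μ p δ f = Ifun μ p δ g := by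
  unfold Ifun
  refine lintegral_congr_ae ?_
  filter_upwards [h] with x hx
  refine lintegral_congr_ae ?_
  filter_upwards [h] with y hy
  simp only [Set.indicator_apply, Set.mem_setOf_eq, hx, hy]

lemma Jfun_congr_aux {X : Type*} [MetricSpace X] [MeasurableSpace X] {μ : Measure X}
    {p δ : ℝ} {f g : X → ℝ} (h : f =ᵐ[μ] g) : Jfun μ p δ f = Jfun μ p δ g := by
  unfold Jfun
  refine lintegral_congr_ae ?_
  filter_upwards [h] with x hx
  refine lintegral_congr_ae ?_
  filter_upwards [h] with y hy
  simp only [Set.indicator_apply, Set.mem_setOf_eq, hx, hy]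

lemma Tfun_congr_aux {X : Type*} [MetricSpace X] [MeasurableSpace X] {μ : Measure X}
    {p : ℝ} {f g : X → ℝ} (h : f =ᵐ[μ] g) : Tfun μ p f = Tfun μ p g := by
  unfold Tfun
  refine lintegral_congr_ae ?_
  filter_upwards [h] with x hx
  refine lintegral_congr_ae ?_
  filter_upwards [h] with y hy
  simp only [Set.indicator_apply, Set.mem_setOf_eq, hx, hy]

/-- The kernel. -/
noncomputable def Kker {X : Type*} [MetricSpace X] [MeasurableSpace X]
    (μ : Measure X) (p : ℝ) (x y : X) : ℝ≥0∞ :=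
  (μ (ball x (dist x y)) * ENNReal.ofReal (dist x y ^ p))⁻¹

lemma Kker_meas {X : Type*} [MetricSpace X] [MeasurableSpace X] [BorelSpace X]
    [SecondCountableTopology X] (μ : Measure X) [SigmaFinite μ] (p : ℝ) :
    Measurable fun q : X × X => Kker μ p q.1 q.2 := by
  have hs : MeasurableSet {q : (X × X) × X | dist q.2 q.1.1 < dist q.1.1 q.1.2} :=
    measurableSet_lt (measurable_snd.dist measurable_fst.fst)
      (measurable_fst.fst.dist measurable_fst.snd)
  have hball : Measurable fun q : X × X => μ (ball q.1 (dist q.1 q.2)) :=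
    measurable_measure_prodMk_left (ν := μ) hs
  exact (hball.mul ((measurable_dist.pow measurable_const).ennreal_ofReal)).inv

/-- The δ-integrand. -/
noncomputable def Gker {X : Type*} [MetricSpace X] [MeasurableSpace X]
    (μ : Measure X) (p ε : ℝ) (f : X → ℝ) (δ : ℝ) (x y : X) : ℝ≥0∞ :=
  ENNReal.ofReal ((p + ε) * (ε * δ ^ (ε - 1)))
    * (if δ < |f x - f y| then ENNReal.ofReal (δ ^ p) * Kker μ p x y else 0)

lemma Gker_meas {X : Type*} [MetricSpace X] [MeasurableSpace X] [BorelSpace X]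
    [SecondCountableTopology X] (μ : Measure X) [SigmaFinite μ] (p ε : ℝ)
    {f : X → ℝ} (hf : Measurable f) :
    Measurable fun q : ℝ × (X × X) => Gker μ p ε f q.1 q.2.1 q.2.2 := by
  have habs : Measurable fun q : X × X => |f q.1 - f q.2| :=
    ((hf.comp measurable_fst).sub (hf.comp measurable_snd)).abs
  refine Measurable.mul ?_ ?_
  · exact (measurable_const.mul (measurable_const.mul
      (measurable_fst.pow measurable_const))).ennreal_ofReal
  · refine Measurable.ite ?_ ?_ measurable_const
    · exact measurableSet_lt measurable_fst (habs.comp measurable_snd)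
    · exact ((measurable_fst.pow measurable_const).ennreal_ofReal).mul
        ((Kker_meas μ p).comp measurable_snd)

set_option maxHeartbeats 1000000 in
/-- The main inequality, for a measurable function and a σ-finite measure. -/
lemma key_ineq_aux {X : Type*} [MetricSpace X] [MeasurableSpace X] [BorelSpace X]
    [SecondCountableTopology X] (μ : Measure X) [SigmaFinite μ] {p : ℝ} (hp : 1 < p)
    {f : X → ℝ} (hf : Measurable f) {ε : ℝ} (hε : ε ∈ Set.Ioo (0:ℝ) 1) :
    Jfun μ p ε f + ENNReal.ofReal ε * Tfun μ p f ≤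
      ENNReal.ofReal (p + ε) * ⨆ δ ∈ Set.Ioo (0:ℝ) 1, Ifun μ p δ f := by
  obtain ⟨hε0, hε1⟩ := hε
  have hKmeas := Kker_meas μ p
  have hGm := Gker_meas μ p ε hf
  have habs : Measurable fun q : X × X => |f q.1 - f q.2| :=
    ((hf.comp measurable_fst).sub (hf.comp measurable_snd)).abs
  have hAm : Measurable fun q : X × X =>
      (if |f q.1 - f q.2| ≤ 1 then
        ENNReal.ofReal (ε * |f q.1 - f q.2| ^ (p + ε)) * Kker μ p q.1 q.2 else 0) := by
    refine Measurable.ite (measurableSet_le habs measurable_const) ?_ measurable_const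
    exact ((measurable_const.mul (habs.pow measurable_const)).ennreal_ofReal).mul hKmeas
  have hA1 : ∀ x, Measurable fun y =>
      (if |f x - f y| ≤ 1 then
        ENNReal.ofReal (ε * |f x - f y| ^ (p + ε)) * Kker μ p x y else 0) :=
    fun x => hAm.comp (measurable_const.prodMk measurable_id)
  -- rewriting the functionals
  have hJ : Jfun μ p ε f = ∫⁻ x, ∫⁻ y,
      (if |f x - f y| ≤ 1 then
        ENNReal.ofReal (ε * |f x - f y| ^ (p + ε)) * Kker μ p x y else 0) ∂μ ∂μ := by
    unfold Jfun
    exact lintegral_congr fun x => lintegral_congr fun y => by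
      simp [Kker, Set.indicator_apply, div_eq_mul_inv]
  have hT : Tfun μ p f = ∫⁻ x, ∫⁻ y,
      (if 1 < |f x - f y| then Kker μ p x y else 0) ∂μ ∂μ := by
    unfold Tfun
    exact lintegral_congr fun x => lintegral_congr fun y => by
      simp [Kker, Set.indicator_apply, one_div]
  have hI : ∀ δ : ℝ, Ifun μ p δ f
      = ∫⁻ x, ∫⁻ y, (if δ < |f x - f y| then ENNReal.ofReal (δ ^ p) * Kker μ p x y else 0) ∂μ ∂μ := by
    intro δ
    unfold Ifun
    exact lintegral_congr fun x => lintegral_congr fun y => by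
      simp [Kker, Set.indicator_apply, div_eq_mul_inv, gt_iff_lt]
  calc Jfun μ p ε f + ENNReal.ofReal ε * Tfun μ p f
      = ∫⁻ x, ((∫⁻ y, (if |f x - f y| ≤ 1 then
            ENNReal.ofReal (ε * |f x - f y| ^ (p + ε)) * Kker μ p x y else 0) ∂μ)
          + ENNReal.ofReal ε * ∫⁻ y, (if 1 < |f x - f y| then Kker μ p x y else 0) ∂μ) ∂μ := by
        rw [hJ, hT, ← lintegral_const_mul' _ _ ENNReal.ofReal_ne_top,
          ← lintegral_add_left hAm.lintegral_prod_right']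
    _ = ∫⁻ x, ∫⁻ y, ((if |f x - f y| ≤ 1 then
            ENNReal.ofReal (ε * |f x - f y| ^ (p + ε)) * Kker μ p x y else 0)
          + ENNReal.ofReal ε * (if 1 < |f x - f y| then Kker μ p x y else 0)) ∂μ ∂μ := by
        refine lintegral_congr fun x => ?_
        rw [lintegral_add_left (hA1 x), lintegral_const_mul' _ _ ENNReal.ofReal_ne_top]
    _ = ∫⁻ x, ∫⁻ y, ∫⁻ δ in Set.Ioo (0:ℝ) 1, Gker μ p ε f δ x y ∂volume ∂μ ∂μ := by
        refine lintegral_congr fun x => lintegral_congr fun y => ?_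
        exact key_pointwise_aux hp ⟨hε0, hε1⟩ |f x - f y| (abs_nonneg _) (Kker μ p x y)
    _ = ∫⁻ x, ∫⁻ δ in Set.Ioo (0:ℝ) 1, (∫⁻ y, Gker μ p ε f δ x y ∂μ) ∂volume ∂μ := by
        refine lintegral_congr fun x => ?_
        exact lintegral_lintegral_swap
          ((hGm.comp (measurable_snd.prodMk
            (measurable_const.prodMk measurable_fst))).aemeasurable)
    _ = ∫⁻ δ in Set.Ioo (0:ℝ) 1, (∫⁻ x, ∫⁻ y, Gker μ p ε f δ x y ∂μ ∂μ) ∂volume := by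
        refine lintegral_lintegral_swap ?_
        have hH : Measurable fun r : (X × ℝ) × X => Gker μ p ε f r.1.2 r.1.1 r.2 :=
          hGm.comp ((measurable_fst.snd).prodMk (measurable_fst.fst.prodMk measurable_snd))
        exact hH.lintegral_prod_right'.aemeasurable
    _ = ∫⁻ δ in Set.Ioo (0:ℝ) 1,
          ENNReal.ofReal ((p + ε) * (ε * δ ^ (ε - 1))) * Ifun μ p δ f ∂volume := by
        refine lintegral_congr fun δ => ?_
        rw [hI δ]
        unfold Gker
        rw [show (fun x => ∫⁻ y, ENNReal.ofReal ((p + ε) * (ε * δ ^ (ε - 1)))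
              * (if δ < |f x - f y| then ENNReal.ofReal (δ ^ p) * Kker μ p x y else 0) ∂μ)
            = fun x => ENNReal.ofReal ((p + ε) * (ε * δ ^ (ε - 1))) *
                ∫⁻ y, (if δ < |f x - f y| then ENNReal.ofReal (δ ^ p) * Kker μ p x y else 0) ∂μ from
          funext fun x => lintegral_const_mul' _ _ ENNReal.ofReal_ne_top]
        exact lintegral_const_mul' _ _ ENNReal.ofReal_ne_top
    _ ≤ ∫⁻ δ in Set.Ioo (0:ℝ) 1,
          ENNReal.ofReal ((p + ε) * (ε * δ ^ (ε - 1)))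
            * (⨆ δ' ∈ Set.Ioo (0:ℝ) 1, Ifun μ p δ' f) ∂volume := by
        refine lintegral_mono_ae ?_
        filter_upwards [ae_restrict_mem measurableSet_Ioo] with δ hδ
        exact mul_le_mul_right (le_biSup (fun δ' => Ifun μ p δ' f) hδ) _
    _ = ENNReal.ofReal (p + ε) * ⨆ δ ∈ Set.Ioo (0:ℝ) 1, Ifun μ p δ f := by
        rw [lintegral_mul_const _ (by
          exact (measurable_const.mul (measurable_const.mul
            (measurable_id.pow measurable_const))).ennreal_ofReal)]
        congr 1
        have h2 : ∀ δ : ℝ, (p + ε) * (ε * δ ^ (ε - 1)) = ((p + ε) * ε) * δ ^ (ε - 1) := by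
          intro δ; ring
        simp_rw [h2]
        rw [lintegral_rpow_Ioo_aux zero_le_one hε0 (by positivity), Real.one_rpow, mul_one]
        congr 1
        field_simp

/-- Let `(X,d,m)` be a metric measure space, `p ∈ (1,∞)` and
`f ∈ L^p(m)`. If `M := sup_{δ ∈ (0,1)} I_δ(f) < ∞`, then for every `ε ∈ (0,1)`:
`J_ε(f) + ε T(f) ≤ (p+ε) M`; in particular `sup_{ε ∈ (0,1)} J_ε(f) < ∞` and `T(f) < ∞`. -/
theorem Jfun_add_Tfun_le_of_sup_Ifun_lt_top {X : Type*} [MetricSpace X] [CompleteSpace X]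
    [TopologicalSpace.SeparableSpace X] [MeasurableSpace X] [BorelSpace X]
    (μ : Measure X) (hμ : μ ≠ 0) (hballs : ∀ (x : X) (r : ℝ), μ (ball x r) < ∞)
    (p : ℝ) (hp : 1 < p)
    (f : X → ℝ) (hf : MemLp f (ENNReal.ofReal p) μ)
    (hM : (⨆ δ ∈ Set.Ioo (0 : ℝ) 1, Ifun μ p δ f) < ∞) :
    (∀ ε ∈ Set.Ioo (0 : ℝ) 1,
        Jfun μ p ε f + ENNReal.ofReal ε * Tfun μ p f ≤
          ENNReal.ofReal (p + ε) * ⨆ δ ∈ Set.Ioo (0 : ℝ) 1, Ifun μ p δ f) ∧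
      (⨆ ε ∈ Set.Ioo (0 : ℝ) 1, Jfun μ p ε f) < ∞ ∧ Tfun μ p f < ∞ := by
  haveI : SecondCountableTopology X := UniformSpace.secondCountable_of_separable X
  have hne : Nonempty X := by
    by_contra h
    rw [not_nonempty_iff] at h
    refine hμ (Measure.ext fun s _ => ?_)
    simp [Set.eq_empty_of_isEmpty s]
  obtain ⟨x0⟩ := hne
  haveI : SigmaFinite μ := by
    refine ⟨⟨⟨fun n => ball x0 n, fun _ => trivial, fun n => hballs x0 n, ?_⟩⟩⟩
    rw [Set.eq_univ_iff_forall]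
    intro x
    obtain ⟨n, hn⟩ := exists_nat_gt (dist x x0)
    exact Set.mem_iUnion.mpr ⟨n, by simpa [Metric.mem_ball] using hn⟩
  obtain ⟨g, hgm, hfg⟩ : ∃ g : X → ℝ, Measurable g ∧ f =ᵐ[μ] g :=
    ⟨hf.1.mk f, hf.1.stronglyMeasurable_mk.measurable, hf.1.ae_eq_mk⟩
  have hsup : (⨆ δ ∈ Set.Ioo (0:ℝ) 1, Ifun μ p δ f)
      = ⨆ δ ∈ Set.Ioo (0:ℝ) 1, Ifun μ p δ g :=
    iSup_congr fun δ => iSup_congr fun _ => Ifun_congr_aux hfg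
  have hmain : ∀ ε ∈ Set.Ioo (0:ℝ) 1,
      Jfun μ p ε f + ENNReal.ofReal ε * Tfun μ p f ≤
        ENNReal.ofReal (p + ε) * ⨆ δ ∈ Set.Ioo (0:ℝ) 1, Ifun μ p δ f := by
    intro ε hε
    rw [Jfun_congr_aux hfg, Tfun_congr_aux hfg, hsup]
    exact key_ineq_aux μ hp hgm hε
  refine ⟨hmain, ?_, ?_⟩
  · refine lt_of_le_of_lt
      (b := ENNReal.ofReal (p + 1) * ⨆ δ ∈ Set.Ioo (0:ℝ) 1, Ifun μ p δ f)
      (iSup₂_le fun ε hε => ?_)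
      (ENNReal.mul_lt_top ENNReal.ofReal_lt_top hM)
    calc Jfun μ p ε f
        ≤ Jfun μ p ε f + ENNReal.ofReal ε * Tfun μ p f := le_self_add
      _ ≤ ENNReal.ofReal (p + ε) * ⨆ δ ∈ Set.Ioo (0:ℝ) 1, Ifun μ p δ f := hmain ε hε
      _ ≤ ENNReal.ofReal (p + 1) * ⨆ δ ∈ Set.Ioo (0:ℝ) 1, Ifun μ p δ f :=
          mul_le_mul_left (ENNReal.ofReal_le_ofReal (by linarith [hε.2])) _
  · have h2 := hmain (1/2) ⟨by norm_num, by norm_num⟩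
    have hT : ENNReal.ofReal (1/2) * Tfun μ p f < ⊤ :=
      lt_of_le_of_lt (le_trans le_add_self h2)
        (ENNReal.mul_lt_top ENNReal.ofReal_lt_top hM)
    by_contra htop
    rw [not_lt, top_le_iff] at htop
    rw [htop, ENNReal.mul_top (by norm_num [ENNReal.ofReal_eq_zero] :
      ENNReal.ofReal (1/2) ≠ 0)] at hT
    exact absurd hT (lt_irrefl _)
end

section
/- Let (X,d,m) be a metric measure space whose measure m is uniformly doubling with constant C_D, let p ∈ (1,∞), and let f : X → ℝ be Lipschitz with Lipschitz constant at most 1. Then there exists a constant C > 0 (depending only on C_D and p) such that for every δ > 0 and every x ∈ X: ∫_X 1_{{|f(x)−f(y)|>δ}}(y) · δ^p / (m(B_{d(x,y)}(x))·d(x,y)^p) dm(y) ≤ C. -/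
open MeasureTheory Metric Filter Set
open scoped ENNReal Topology NNReal

/-- `μ` is uniformly doubling with constant `C`. -/
def IsUniformlyDoubling {X : Type*} [MetricSpace X] [MeasurableSpace X]
    (μ : Measure X) (C : ℝ≥0) : Prop :=
  ∀ x : X, ∀ r : ℝ, 0 < r → μ (ball x (2 * r)) ≤ (C : ℝ≥0∞) * μ (ball x r)

-- positivity of balls
lemma ball_pos_aux {X : Type*} [MetricSpace X] [MeasurableSpace X]
    (μ : Measure X) (hμ : μ ≠ 0) (CD : ℝ≥0) (hdoub : IsUniformlyDoubling μ CD)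
    (x : X) (r : ℝ) (hr : 0 < r) : 0 < μ (ball x r) := by
  by_contra h
  push_neg at h
  have h0 : μ (ball x r) = 0 := le_antisymm h (zero_le)
  have key : ∀ k : ℕ, μ (ball x (2 ^ k * r)) = 0 := by
    intro k
    induction k with
    | zero => simpa using h0
    | succ n ih =>
      have h2 : (2 : ℝ) ^ (n + 1) * r = 2 * (2 ^ n * r) := by ring
      have := hdoub x (2 ^ n * r) (by positivity)
      rw [← h2] at this
      simpa [ih] using this
  have : μ Set.univ = 0 := by
    have hcov : (Set.univ : Set X) ⊆ ⋃ k : ℕ, ball x (2 ^ k * r) := by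
      intro y _
      obtain ⟨k, hk⟩ := pow_unbounded_of_one_lt (dist x y / r) (by norm_num : (1:ℝ) < 2)
      refine Set.mem_iUnion.2 ⟨k, ?_⟩
      rw [mem_ball, dist_comm]
      calc dist x y = dist x y / r * r := by field_simp
        _ < 2 ^ k * r := by gcongr
    refine le_antisymm ?_ (zero_le)
    calc μ Set.univ ≤ μ (⋃ k : ℕ, ball x (2 ^ k * r)) := measure_mono hcov
      _ ≤ ∑' k : ℕ, μ (ball x (2 ^ k * r)) := measure_iUnion_le _
      _ = 0 := by simp [key]
  exact hμ (by simpa [Measure.measure_univ_eq_zero] using this)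

/-- Let `(X,d,m)` be a metric measure space whose measure is uniformly
doubling with constant `C_D`, `p ∈ (1,∞)`, and `f : X → ℝ` `1`-Lipschitz. Then there is
`C > 0` such that for every `δ > 0` and every `x ∈ X`:
`∫_X 1_{|f(x)-f(y)|>δ}(y) δ^p/(μ(B_{d(x,y)}(x)) d(x,y)^p) dμ(y) ≤ C`. -/
theorem lintegral_indicator_le_const {X : Type*} [MetricSpace X] [CompleteSpace X]
    [TopologicalSpace.SeparableSpace X] [MeasurableSpace X] [BorelSpace X]
    (μ : Measure X) (hμ : μ ≠ 0) (hballs : ∀ (x : X) (r : ℝ), μ (ball x r) < ∞)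
    (CD : ℝ≥0) (hCD : 0 < CD) (hdoub : IsUniformlyDoubling μ CD)
    (p : ℝ) (hp : 1 < p) (f : X → ℝ) (hf : LipschitzWith 1 f) :
    ∃ C > (0 : ℝ), ∀ δ : ℝ, 0 < δ → ∀ x : X,
      ∫⁻ y, Set.indicator {y | |f x - f y| > δ}
          (fun y => ENNReal.ofReal (δ ^ p) /
            (μ (ball x (dist x y)) * ENNReal.ofReal (dist x y ^ p))) y ∂μ ≤
        ENNReal.ofReal C := by
  have hp0 : (0:ℝ) < p := lt_trans one_pos hp
  set a : ℝ := (2:ℝ) ^ (-p) with ha_def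
  have ha0 : 0 < a := Real.rpow_pos_of_pos (by norm_num) _
  have ha1 : a < 1 := by
    rw [ha_def]
    apply Real.rpow_lt_one_of_one_lt_of_neg (by norm_num) (by linarith)
  have h1a : 0 < 1 - a := by linarith
  refine ⟨(CD:ℝ)^2 * (1 - a)⁻¹, by positivity, ?_⟩
  intro δ hδ x
  set g : X → ℝ≥0∞ := fun y => ENNReal.ofReal (δ ^ p) /
      (μ (ball x (dist x y)) * ENNReal.ofReal (dist x y ^ p)) with hg_def
  set r : ℕ → ℝ := fun n => 2 ^ n * δ with hr_def
  have hrpos : ∀ n, 0 < r n := fun n => by positivity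
  set A : ℕ → Set X := fun n => closedBall x (r (n+1)) \ ball x (r n) with hA_def
  have hAmeas : ∀ n, MeasurableSet (A n) :=
    fun n => measurableSet_closedBall.diff measurableSet_ball
  set B : ℕ → ℝ≥0∞ := fun n => μ (ball x (r n)) with hB_def
  have hB0 : ∀ n, B n ≠ 0 :=
    fun n => (ball_pos_aux μ hμ CD hdoub x (r n) (hrpos n)).ne'
  have hBt : ∀ n, B n ≠ ∞ := fun n => (hballs x (r n)).ne
  set S : Set X := (closedBall x δ)ᶜ with hS_def
  -- step 1: indicator ≤ indicator of S
  have hsubT : {y | |f x - f y| > δ} ⊆ S := by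
    intro y hy
    simp only [hS_def, Set.mem_compl_iff, mem_closedBall, not_le]
    have := hf.dist_le_mul x y
    rw [Real.dist_eq] at this
    simp only [Set.mem_setOf_eq] at hy
    rw [dist_comm]
    calc δ < |f x - f y| := hy
      _ ≤ 1 * dist x y := this
      _ = dist x y := one_mul _
  have hSmeas : MeasurableSet S := measurableSet_closedBall.compl
  -- pointwise bound on each annulus
  have hpt : ∀ n, ∀ y ∈ A n, g y ≤ ENNReal.ofReal (a ^ n) / B n := by
    intro n y hy
    have hd1 : r n ≤ dist x y := by
      have := hy.2
      simp only [mem_ball, not_lt] at this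
      rwa [dist_comm] at this
    have hdpos : 0 < dist x y := lt_of_lt_of_le (hrpos n) hd1
    have step1 : g y ≤ ENNReal.ofReal (δ ^ p) / (B n * ENNReal.ofReal (r n ^ p)) := by
      rw [hg_def]
      exact ENNReal.div_le_div le_rfl (mul_le_mul'
        (measure_mono (ball_subset_ball hd1))
        (ENNReal.ofReal_le_ofReal (Real.rpow_le_rpow (hrpos n).le hd1 hp0.le)))
    refine step1.trans_eq ?_
    have hkey : δ ^ p = a ^ n * (r n) ^ p := by
      rw [hr_def]
      simp only
      have e1 : ((2:ℝ)^(-p))^n = (2:ℝ)^(-(p*(n:ℝ))) := by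
        rw [← Real.rpow_natCast ((2:ℝ)^(-p)) n, ← Real.rpow_mul (by norm_num), neg_mul]
      have e2 : (((2:ℝ)^n : ℝ))^p = (2:ℝ)^(p*(n:ℝ)) := by
        rw [← Real.rpow_natCast (2:ℝ) n, ← Real.rpow_mul (by norm_num), mul_comm]
      rw [Real.mul_rpow (by positivity) hδ.le, ha_def, e1, e2, ← mul_assoc,
        ← Real.rpow_add (by norm_num : (0:ℝ) < 2), neg_add_cancel, Real.rpow_zero, one_mul]
    rw [hkey, ENNReal.ofReal_mul (by positivity),
      ENNReal.mul_div_mul_right _ _ (by positivity)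
        ENNReal.ofReal_ne_top]
  -- covering
  have hcov : S ⊆ ⋃ n, A n := by
    intro y hy
    simp only [hS_def, Set.mem_compl_iff, mem_closedBall, not_le] at hy
    have hd : δ < dist y x := hy
    have hex : ∃ n : ℕ, dist y x ≤ r (n+1) := by
      obtain ⟨k, hk⟩ := pow_unbounded_of_one_lt (dist y x / δ) (by norm_num : (1:ℝ) < 2)
      refine ⟨k, ?_⟩
      rw [hr_def]
      have : dist y x = dist y x / δ * δ := by field_simp
      rw [this]
      have : (2:ℝ)^k ≤ 2^(k+1) := by
        apply pow_le_pow_right₀ (by norm_num) (by omega)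
      nlinarith [hk, hδ]
    classical
    set n := Nat.find hex with hn_def
    refine Set.mem_iUnion.2 ⟨n, ?_, ?_⟩
    · rw [mem_closedBall]; exact Nat.find_spec hex
    · simp only [mem_ball, not_lt]
      rcases Nat.eq_zero_or_pos n with h0 | h0
      · rw [h0]
        simp only [hr_def, pow_zero, one_mul]
        exact hd.le
      · have := Nat.find_min hex (m := n - 1) (by omega)
        push_neg at this
        have hrn : r ((n-1)+1) = r n := by congr 1; omega
        rw [hrn] at this
        exact this.le
  -- measure of annuli
  have hAn : ∀ n, μ (A n) ≤ (CD:ℝ≥0∞)^2 * B n := by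
    intro n
    have h1 : A n ⊆ ball x (2 * r (n+1)) := fun y hy =>
      (closedBall_subset_ball (by linarith [hrpos (n+1)])) hy.1
    have h2 : r (n+1) = 2 * r n := by rw [hr_def]; simp; ring
    calc μ (A n) ≤ μ (ball x (2 * r (n+1))) := measure_mono h1
      _ ≤ CD * μ (ball x (r (n+1))) := hdoub x _ (hrpos (n+1))
      _ = CD * μ (ball x (2 * r n)) := by rw [h2]
      _ ≤ CD * (CD * μ (ball x (r n))) := by gcongr; exact hdoub x _ (hrpos n)
      _ = (CD:ℝ≥0∞)^2 * B n := by rw [hB_def]; ring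
  -- main chain
  calc ∫⁻ y, Set.indicator {y | |f x - f y| > δ} g y ∂μ
      ≤ ∫⁻ y, Set.indicator S g y ∂μ := by
        apply lintegral_mono
        exact Set.indicator_le_indicator_of_subset hsubT (fun _ => zero_le)
    _ = ∫⁻ y in S, g y ∂μ := lintegral_indicator hSmeas g
    _ ≤ ∫⁻ y in ⋃ n, A n, g y ∂μ := lintegral_mono_set hcov
    _ ≤ ∑' n, ∫⁻ y in A n, g y ∂μ := lintegral_iUnion_le _ _
    _ ≤ ∑' n, ENNReal.ofReal (a ^ n) / B n * μ (A n) := by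
        refine ENNReal.tsum_le_tsum fun n => ?_
        calc ∫⁻ y in A n, g y ∂μ
            ≤ ∫⁻ _ in A n, ENNReal.ofReal (a ^ n) / B n ∂μ :=
              setLIntegral_mono' (hAmeas n) (hpt n)
          _ = ENNReal.ofReal (a ^ n) / B n * μ (A n) := setLIntegral_const _ _
    _ ≤ ∑' n, ENNReal.ofReal (a ^ n) * (CD:ℝ≥0∞)^2 := by
        refine ENNReal.tsum_le_tsum fun n => ?_
        calc ENNReal.ofReal (a ^ n) / B n * μ (A n)
            ≤ ENNReal.ofReal (a ^ n) / B n * ((CD:ℝ≥0∞)^2 * B n) := by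
              gcongr; exact hAn n
          _ = ENNReal.ofReal (a ^ n) * (CD:ℝ≥0∞)^2 * ((B n)⁻¹ * B n) := by
              rw [div_eq_mul_inv]; ring
          _ = ENNReal.ofReal (a ^ n) * (CD:ℝ≥0∞)^2 := by
              rw [ENNReal.inv_mul_cancel (hB0 n) (hBt n), mul_one]
    _ = (∑' n, (ENNReal.ofReal a) ^ n) * (CD:ℝ≥0∞)^2 := by
        rw [ENNReal.tsum_mul_right]
        congr 1
        exact tsum_congr fun n => by rw [ENNReal.ofReal_pow ha0.le]
    _ = (1 - ENNReal.ofReal a)⁻¹ * (CD:ℝ≥0∞)^2 := by rw [ENNReal.tsum_geometric]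
    _ ≤ ENNReal.ofReal ((CD:ℝ)^2 * (1 - a)⁻¹) := by
        have h1 : (1 : ℝ≥0∞) - ENNReal.ofReal a = ENNReal.ofReal (1 - a) := by
          rw [ENNReal.ofReal_sub _ ha0.le, ENNReal.ofReal_one]
        rw [h1, ← ENNReal.ofReal_inv_of_pos h1a]
        have h2 : ((CD:ℝ≥0∞))^2 = ENNReal.ofReal ((CD:ℝ)^2) := by
          rw [ENNReal.ofReal_pow CD.coe_nonneg, ENNReal.ofReal_coe_nnreal]
        rw [h2, ← ENNReal.ofReal_mul (by positivity), mul_comm]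
end

section
/- Let (X,d,m) be a metric measure space whose measure m is uniformly doubling with constant C_D, let p ∈ (1,∞), and let f : X → ℝ be Lipschitz with Lipschitz constant at most 1 and with support contained in a ball B_{r̄}(x̄). Then there exists a constant C > 0 (depending only on C_D and p) such that for every δ > 0: ∫_{X∖B_{r̄+1}(x̄)} ∫_X 1_{{|f(x)−f(y)|>δ}}(y) · δ^p / (m(B_{d(x,y)}(x))·d(x,y)^p) dm(y) dm(x) ≤ C·δ^p·m(B_{r̄}(x̄)). -/
open MeasureTheory Metric Filter Set
open scoped ENNReal Topology NNReal

lemma doubling_pow' {X : Type*} [MetricSpace X] [MeasurableSpace X]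
    {μ : Measure X} {CD : ℝ≥0} (hdoub : IsUniformlyDoubling μ CD)
    (x : X) {r : ℝ} (hr : 0 < r) (n : ℕ) :
    μ (ball x (2 ^ n * r)) ≤ (CD : ℝ≥0∞) ^ n * μ (ball x r) := by
  induction n with
  | zero => simp
  | succ n ih =>
    have h2 : (2:ℝ) ^ (n+1) * r = 2 * (2 ^ n * r) := by ring
    rw [h2]
    calc μ (ball x (2 * (2 ^ n * r))) ≤ (CD : ℝ≥0∞) * μ (ball x (2 ^ n * r)) :=
          hdoub x _ (by positivity)
      _ ≤ (CD : ℝ≥0∞) * ((CD:ℝ≥0∞) ^ n * μ (ball x r)) := by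
          exact mul_le_mul_right ih _
      _ = (CD:ℝ≥0∞) ^ (n+1) * μ (ball x r) := by ring

/-- Let `(X,d,m)` be a metric measure space whose measure is uniformly
doubling with constant `C_D`, `p ∈ (1,∞)`, and `f : X → ℝ` `1`-Lipschitz with support
contained in a ball `B_r̄(x̄)`. Then there is `C > 0` such that for every `δ > 0`:
`∫_{X∖B_{r̄+1}(x̄)} ∫_X 1_{|f(x)-f(y)|>δ}(y) δ^p/(μ(B_{d(x,y)}(x)) d(x,y)^p) dμ(y) dμ(x)
  ≤ C δ^p μ(B_r̄(x̄))`. -/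
theorem lintegral_lintegral_compl_ball_le {X : Type*} [MetricSpace X] [CompleteSpace X]
    [TopologicalSpace.SeparableSpace X] [MeasurableSpace X] [BorelSpace X]
    (μ : Measure X) (hμ : μ ≠ 0) (hballs : ∀ (x : X) (r : ℝ), μ (ball x r) < ∞)
    (CD : ℝ≥0) (hCD : 0 < CD) (hdoub : IsUniformlyDoubling μ CD)
    (p : ℝ) (hp : 1 < p) (f : X → ℝ) (hf : LipschitzWith 1 f)
    (xbar : X) (rbar : ℝ) (hsupp : Function.support f ⊆ ball xbar rbar) :
    ∃ C > (0 : ℝ), ∀ δ : ℝ, 0 < δ →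
      ∫⁻ x in (ball xbar (rbar + 1))ᶜ, ∫⁻ y, Set.indicator {y | |f x - f y| > δ}
          (fun y => ENNReal.ofReal (δ ^ p) /
            (μ (ball x (dist x y)) * ENNReal.ofReal (dist x y ^ p))) y ∂μ ∂μ ≤
        ENNReal.ofReal (C * δ ^ p) * μ (ball xbar rbar) := by
  have hp0 : (0:ℝ) < p := lt_trans one_pos hp
  -- choose the doubling exponent n
  obtain ⟨n, hn⟩ := exists_nat_ge (2 * |rbar| + 4)
  have h2n : 2 * |rbar| + 4 ≤ (2:ℝ) ^ n := hn.trans (by exact_mod_cast (Nat.lt_two_pow_self (n := n)).le)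
  -- the annuli
  set A : ℕ → Set X := fun k =>
    {x | (2:ℝ)^k ≤ dist x xbar - rbar ∧ dist x xbar - rbar < 2^(k+1)} with hA
  have hAmeas : ∀ k, MeasurableSet (A k) := by
    intro k
    have h1 : Measurable fun x : X => dist x xbar - rbar :=
      (measurable_dist.comp (measurable_id.prodMk measurable_const)).sub measurable_const
    exact (measurableSet_le measurable_const h1).inter (measurableSet_lt h1 measurable_const)
  -- the key integral J
  set g : X → ℝ≥0∞ := fun x =>
    (μ (ball x (dist x xbar - rbar)) * ENNReal.ofReal ((dist x xbar - rbar) ^ p))⁻¹ with hg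
  set J : ℝ≥0∞ := ∫⁻ x in (ball xbar (rbar + 1))ᶜ, g x ∂μ with hJ
  -- the geometric ratio
  set r : ℝ≥0∞ := (ENNReal.ofReal ((2:ℝ) ^ p))⁻¹ with hr
  have h2p1 : (1:ℝ) < (2:ℝ) ^ p := by
    calc (1:ℝ) = (2:ℝ) ^ (0:ℝ) := by norm_num
    _ < (2:ℝ) ^ p := by
        exact Real.rpow_lt_rpow_left_iff (by norm_num) |>.mpr hp0
  have hrlt : r < 1 := by
    rw [hr, ENNReal.inv_lt_one]
    exact_mod_cast ENNReal.one_lt_ofReal.mpr h2p1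
  have hrpow : ∀ k : ℕ, (ENNReal.ofReal (((2:ℝ)^k) ^ p))⁻¹ = r ^ k := by
    intro k
    rw [hr, ← ENNReal.inv_pow, ← ENNReal.ofReal_pow (by positivity)]
    congr 2
    rw [← Real.rpow_natCast ((2:ℝ)^p) k, ← Real.rpow_natCast (2:ℝ) k,
      ← Real.rpow_mul (by norm_num), ← Real.rpow_mul (by norm_num), mul_comm]
  set K : ℝ≥0∞ := (CD : ℝ≥0∞)^n * (1 - r)⁻¹ with hK
  have hKtop : K ≠ ∞ := by
    apply ENNReal.mul_ne_top (by simp)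
    rw [Ne, ENNReal.inv_eq_top, tsub_eq_zero_iff_le]
    exact fun h => absurd (lt_of_lt_of_le hrlt h) (lt_irrefl _)
  -- bound J ≤ K
  have hJK : J ≤ K := by
    have hcover : (ball xbar (rbar + 1))ᶜ ⊆ ⋃ k, A k := by
      intro x hx
      have hx1 : rbar + 1 ≤ dist x xbar := by
        simpa [not_lt] using (fun h => hx (mem_ball.mpr h) : ¬ dist x xbar < rbar + 1)
      obtain ⟨k, hk1, hk2⟩ := exists_nat_pow_near (by linarith : (1:ℝ) ≤ dist x xbar - rbar)
        (by norm_num : (1:ℝ) < 2)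
      exact mem_iUnion.mpr ⟨k, hk1, hk2⟩
    calc J ≤ ∫⁻ x in ⋃ k, A k, g x ∂μ := lintegral_mono_set hcover
      _ ≤ ∑' k, ∫⁻ x in A k, g x ∂μ := lintegral_iUnion_le _ _
      _ ≤ ∑' k, (CD : ℝ≥0∞)^n * r ^ k := by
          apply ENNReal.tsum_le_tsum
          intro k
          -- per-annulus bound
          have hk2pos : (0:ℝ) < 2 ^ k := by positivity
          have hbound : ∀ x ∈ A k,
              g x ≤ ((CD : ℝ≥0∞)^n * (μ (A k))⁻¹) * (ENNReal.ofReal (((2:ℝ)^k) ^ p))⁻¹ := by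
            intro x hx
            obtain ⟨hx1, hx2⟩ := hx
            have hsub : A k ⊆ ball x (2 ^ n * 2 ^ k) := by
              intro z hz
              obtain ⟨hz1, hz2⟩ := hz
              have habs : |rbar| ≥ rbar := le_abs_self rbar
              have h2k1 : (1:ℝ) ≤ 2 ^ k := one_le_pow₀ (by norm_num)
              have : dist z x ≤ dist z xbar + dist x xbar := dist_triangle_right z x xbar
              have h2' : (2:ℝ)^(k+1) = 2 * 2^k := by ring
              rw [mem_ball]
              have hm1 : (2*|rbar|) * 1 ≤ (2*|rbar|) * 2^k :=
                mul_le_mul_of_nonneg_left h2k1 (by positivity)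
              have hm2 : (2*|rbar|) * 2^k ≤ ((2:ℝ)^n - 4) * 2^k :=
                mul_le_mul_of_nonneg_right (by linarith) (le_of_lt hk2pos)
              have hexp : ((2:ℝ)^n - 4) * 2^k = 2^n * 2^k - 4 * 2^k := by ring
              linarith
            have hAk : μ (A k) ≤ (CD : ℝ≥0∞)^n * μ (ball x (2^k)) := by
              calc μ (A k) ≤ μ (ball x (2 ^ n * 2 ^ k)) := measure_mono hsub
                _ ≤ (CD : ℝ≥0∞)^n * μ (ball x (2^k)) := doubling_pow' hdoub x hk2pos n
            -- now bound g x
            have h1 : g x ≤ (μ (ball x ((2:ℝ)^k)) * ENNReal.ofReal (((2:ℝ)^k) ^ p))⁻¹ := by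
              rw [hg]
              apply ENNReal.inv_le_inv.mpr
              apply mul_le_mul'
              · exact measure_mono (ball_subset_ball hx1)
              · exact ENNReal.ofReal_le_ofReal
                  (Real.rpow_le_rpow (le_of_lt hk2pos) hx1 (le_of_lt hp0))
            refine h1.trans ?_
            rw [ENNReal.mul_inv (Or.inr (by simp)) (Or.inr (by
              simp [ENNReal.ofReal_eq_zero, not_le]
              positivity))]
            apply mul_le_mul_left
            -- (μ ball)⁻¹ ≤ CD^n * (μ A k)⁻¹
            calc (μ (ball x ((2:ℝ)^k)))⁻¹
                ≤ (μ (A k) / (CD:ℝ≥0∞)^n)⁻¹ :=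
                  ENNReal.inv_le_inv.mpr (ENNReal.div_le_of_le_mul' hAk)
              _ = (CD:ℝ≥0∞)^n / μ (A k) :=
                  ENNReal.inv_div (Or.inl (by simp)) (Or.inl (by simp [hCD.ne']))
              _ = (CD:ℝ≥0∞)^n * (μ (A k))⁻¹ := div_eq_mul_inv _ _
          calc ∫⁻ x in A k, g x ∂μ
              ≤ ∫⁻ _ in A k, ((CD : ℝ≥0∞)^n * (μ (A k))⁻¹) *
                  (ENNReal.ofReal (((2:ℝ)^k) ^ p))⁻¹ ∂μ := setLIntegral_mono' (hAmeas k) hbound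
            _ = ((CD : ℝ≥0∞)^n * (μ (A k))⁻¹) * (ENNReal.ofReal (((2:ℝ)^k) ^ p))⁻¹ * μ (A k) := by
                rw [setLIntegral_const]
            _ ≤ (CD : ℝ≥0∞)^n * r ^ k := by
                rw [hrpow k]
                calc (CD : ℝ≥0∞)^n * (μ (A k))⁻¹ * r ^ k * μ (A k)
                    = (CD : ℝ≥0∞)^n * r ^ k * ((μ (A k))⁻¹ * μ (A k)) := by ring
                  _ ≤ (CD : ℝ≥0∞)^n * r ^ k * 1 := by
                      exact mul_le_mul_right (ENNReal.inv_mul_le_one _) _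
                  _ = (CD : ℝ≥0∞)^n * r ^ k := mul_one _
      _ = K := by rw [ENNReal.tsum_mul_left, ENNReal.tsum_geometric]
  refine ⟨K.toReal + 1, by positivity, ?_⟩
  intro δ hδ
  have hμB : μ (ball xbar rbar) ≠ ∞ := (hballs _ _).ne
  have hct : ENNReal.ofReal (δ ^ p) * μ (ball xbar rbar) ≠ ∞ :=
    ENNReal.mul_ne_top ENNReal.ofReal_ne_top hμB
  have hmain : ∀ x ∈ (ball xbar (rbar + 1))ᶜ,
      (∫⁻ y, Set.indicator {y | |f x - f y| > δ}
          (fun y => ENNReal.ofReal (δ ^ p) /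
            (μ (ball x (dist x y)) * ENNReal.ofReal (dist x y ^ p))) y ∂μ) ≤
      (ENNReal.ofReal (δ ^ p) * μ (ball xbar rbar)) * g x := by
    intro x hx
    have hxd : rbar + 1 ≤ dist x xbar := by
      simpa [not_lt] using (fun h => hx (mem_ball.mpr h) : ¬ dist x xbar < rbar + 1)
    have hfx : f x = 0 := by
      by_contra h
      exact hx (ball_subset_ball (by linarith) (hsupp h))
    have hS : {y | |f x - f y| > δ} ⊆ ball xbar rbar := by
      intro y hy
      apply hsupp
      intro h0
      rw [Set.mem_setOf_eq, hfx, h0, sub_zero, abs_zero] at hy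
      linarith
    have hsx : (0:ℝ) < dist x xbar - rbar := by linarith
    calc (∫⁻ y, Set.indicator {y | |f x - f y| > δ}
          (fun y => ENNReal.ofReal (δ ^ p) /
            (μ (ball x (dist x y)) * ENNReal.ofReal (dist x y ^ p))) y ∂μ)
        ≤ ∫⁻ y, Set.indicator (ball xbar rbar)
            (fun _ => ENNReal.ofReal (δ ^ p) * g x) y ∂μ := by
          apply lintegral_mono
          intro y
          by_cases hy : y ∈ {y | |f x - f y| > δ}
          · rw [Set.indicator_of_mem hy, Set.indicator_of_mem (hS hy)]
            have hyb : dist y xbar < rbar := mem_ball.mp (hS hy)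
            have hdy : dist x xbar - rbar ≤ dist x y := by
              have := dist_triangle x y xbar
              linarith
            have hden : μ (ball x (dist x xbar - rbar)) *
                ENNReal.ofReal ((dist x xbar - rbar) ^ p) ≤
                μ (ball x (dist x y)) * ENNReal.ofReal (dist x y ^ p) :=
              mul_le_mul' (measure_mono (ball_subset_ball hdy))
                (ENNReal.ofReal_le_ofReal (Real.rpow_le_rpow hsx.le hdy hp0.le))
            have : ENNReal.ofReal (δ ^ p) * g x = ENNReal.ofReal (δ ^ p) /
                (μ (ball x (dist x xbar - rbar)) *
                  ENNReal.ofReal ((dist x xbar - rbar) ^ p)) := by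
              rw [hg, div_eq_mul_inv]
            rw [this]
            exact ENNReal.div_le_div le_rfl hden
          · rw [Set.indicator_of_notMem hy]
            exact zero_le
      _ = (ENNReal.ofReal (δ ^ p) * g x) * μ (ball xbar rbar) :=
          lintegral_indicator_const measurableSet_ball _
      _ = (ENNReal.ofReal (δ ^ p) * μ (ball xbar rbar)) * g x := by ring
  have hKle : K ≤ ENNReal.ofReal (K.toReal + 1) := by
    calc K = ENNReal.ofReal K.toReal := (ENNReal.ofReal_toReal hKtop).symm
      _ ≤ ENNReal.ofReal (K.toReal + 1) := ENNReal.ofReal_le_ofReal (by linarith)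
  calc (∫⁻ x in (ball xbar (rbar + 1))ᶜ, ∫⁻ y, Set.indicator {y | |f x - f y| > δ}
          (fun y => ENNReal.ofReal (δ ^ p) /
            (μ (ball x (dist x y)) * ENNReal.ofReal (dist x y ^ p))) y ∂μ ∂μ)
      ≤ ∫⁻ x in (ball xbar (rbar + 1))ᶜ,
          (ENNReal.ofReal (δ ^ p) * μ (ball xbar rbar)) * g x ∂μ :=
        setLIntegral_mono' measurableSet_ball.compl hmain
    _ = (ENNReal.ofReal (δ ^ p) * μ (ball xbar rbar)) * J :=
        lintegral_const_mul' _ _ hct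
    _ ≤ (ENNReal.ofReal (δ ^ p) * μ (ball xbar rbar)) * ENNReal.ofReal (K.toReal + 1) :=
        mul_le_mul_right (hJK.trans hKle) _
    _ = ENNReal.ofReal ((K.toReal + 1) * δ ^ p) * μ (ball xbar rbar) := by
        rw [ENNReal.ofReal_mul (by positivity)]
        ring
end
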